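/- The Dirichlet log-likelihood, as a function of the parameter α ∈ (0,∞)^d, is concave: for fixed data points x^{(1)},…,x^{(n)} in the interior of the simplex, the function L(α) = ∑_{k=1}^{n} [ log Γ(∑_i α_i) − ∑_i log Γ(α_i) + ∑_i (α_i − 1) log x^{(k)}_i ] is concave on (0,∞)^d. -/

import Mathlib

open Real MeasureTheory Set Filter

noncomputable def myBeta (s t : ℝ) : ℝ :=
  ∫ x in Ioo (0:ℝ) 1, x ^ (s - 1) * (1 - x) ^ (t - 1)

lemma betaInt_integrable {u v : ℝ} (hu : 0 < u) (hv : 0 < v) :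
    IntegrableOn (fun x : ℝ => x ^ (u - 1) * (1 - x) ^ (v - 1)) (Ioo (0:ℝ) 1) := by
  have h := Complex.betaIntegral_convergent (u := (u:ℂ)) (v := (v:ℂ)) (by simpa) (by simpa)
  rw [intervalIntegrable_iff_integrableOn_Ioo_of_le zero_le_one] at h
  refine IntegrableOn.congr_fun h.norm (fun x hx => ?_) measurableSet_Ioo
  obtain ⟨hx0, hx1⟩ := hx
  simp only [norm_mul]
  have h1 : ((x:ℂ)) = ((x:ℝ):ℂ) := rfl
  rw [show (1 - (x:ℂ)) = (((1-x : ℝ)):ℂ) by push_cast; ring]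
  rw [Complex.norm_cpow_eq_rpow_re_of_pos hx0, Complex.norm_cpow_eq_rpow_re_of_pos (by linarith)]
  norm_num

lemma myBeta_eq {s t : ℝ} (hs : 0 < s) (ht : 0 < t) :
    Real.Gamma s * Real.Gamma t = Real.Gamma (s + t) * myBeta s t := by
  have h := Complex.Gamma_mul_Gamma_eq_betaIntegral (s := (s:ℂ)) (t := (t:ℂ))
    (by simpa) (by simpa)
  have hB : Complex.betaIntegral (s:ℂ) (t:ℂ) = ((myBeta s t : ℝ) : ℂ) := by
    rw [Complex.betaIntegral]
    rw [show (fun x : ℝ => (x:ℂ) ^ ((s:ℂ) - 1) * (1 - (x:ℂ)) ^ ((t:ℂ) - 1)) = fun x : ℝ =>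
      (x:ℂ) ^ ((s:ℂ) - 1) * (1 - (x:ℂ)) ^ ((t:ℂ) - 1) from rfl]
    have : ∀ x ∈ uIcc (0:ℝ) 1,
        (x:ℂ) ^ ((s:ℂ) - 1) * (1 - (x:ℂ)) ^ ((t:ℂ) - 1)
          = ((x ^ (s-1) * (1-x) ^ (t-1) : ℝ) : ℂ) := by
      intro x hx
      rw [uIcc_of_le zero_le_one, mem_Icc] at hx
      rw [show ((1:ℂ) - (x:ℂ)) = ((1-x:ℝ):ℂ) by push_cast; ring,
        show ((s:ℂ)-1) = ((s-1:ℝ):ℂ) by push_cast; ring,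
        show ((t:ℂ)-1) = ((t-1:ℝ):ℂ) by push_cast; ring,
        ← Complex.ofReal_cpow hx.1, ← Complex.ofReal_cpow (by linarith : (0:ℝ) ≤ 1-x),
        ← Complex.ofReal_mul]
    rw [intervalIntegral.integral_congr this, intervalIntegral.integral_ofReal]
    norm_cast
    rw [myBeta, intervalIntegral.integral_of_le zero_le_one,
      MeasureTheory.integral_Ioc_eq_integral_Ioo]
  rw [hB, show ((s:ℂ)+(t:ℂ)) = ((s+t:ℝ):ℂ) by push_cast; ring, Complex.Gamma_ofReal,
    Complex.Gamma_ofReal, Complex.Gamma_ofReal, ← Complex.ofReal_mul, ← Complex.ofReal_mul] at h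
  exact_mod_cast h

lemma myBeta_pos {s t : ℝ} (hs : 0 < s) (ht : 0 < t) : 0 < myBeta s t := by
  have h := myBeta_eq hs ht
  have h1 := Real.Gamma_pos_of_pos hs
  have h2 := Real.Gamma_pos_of_pos ht
  have h3 := Real.Gamma_pos_of_pos (by linarith : 0 < s + t)
  nlinarith

lemma log_myBeta {s t : ℝ} (hs : 0 < s) (ht : 0 < t) :
    Real.log (myBeta s t)
      = Real.log (Real.Gamma s) + Real.log (Real.Gamma t) - Real.log (Real.Gamma (s + t)) := by
  have h := myBeta_eq hs ht
  have h1 := Real.Gamma_pos_of_pos hs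
  have h2 := Real.Gamma_pos_of_pos ht
  have h3 := Real.Gamma_pos_of_pos (by linarith : 0 < s + t)
  have hb := myBeta_pos hs ht
  have : myBeta s t = Real.Gamma s * Real.Gamma t / Real.Gamma (s + t) := by
    field_simp at h ⊢; linarith
  rw [this, Real.log_div (by positivity) h3.ne', Real.log_mul h1.ne' h2.ne']

lemma myBeta_holder {s₁ t₁ s₂ t₂ a b : ℝ} (hs₁ : 0 < s₁) (ht₁ : 0 < t₁) (hs₂ : 0 < s₂)
    (ht₂ : 0 < t₂) (ha : 0 < a) (hb : 0 < b) (hab : a + b = 1) :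
    myBeta (a * s₁ + b * s₂) (a * t₁ + b * t₂) ≤ myBeta s₁ t₁ ^ a * myBeta s₂ t₂ ^ b := by
  let f : ℝ → ℝ → ℝ → ℝ → ℝ := fun c u v x => x ^ (c * (u - 1)) * (1 - x) ^ (c * (v - 1))
  have e : Real.HolderConjugate (1 / a) (1 / b) := Real.holderConjugate_one_div ha hb hab
  have posf : ∀ c u v x : ℝ, x ∈ Ioo (0:ℝ) 1 → 0 ≤ f c u v x := fun c u v x hx =>
    mul_nonneg (rpow_nonneg hx.1.le _) (rpow_nonneg (by linarith [hx.2]) _)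
  have posf' : ∀ c u v : ℝ, 0 ≤ᵐ[volume.restrict (Ioo (0:ℝ) 1)] f c u v := fun c u v =>
    (ae_restrict_iff' measurableSet_Ioo).mpr (ae_of_all _ (posf c u v))
  have fpow : ∀ {c : ℝ} (_ : 0 < c) (u v : ℝ) {x : ℝ} (_ : x ∈ Ioo (0:ℝ) 1),
      x ^ (u - 1) * (1 - x) ^ (v - 1) = f c u v x ^ (1 / c) := by
    intro c hc u v x hx
    dsimp only [f]
    rw [mul_rpow (rpow_nonneg hx.1.le _) (rpow_nonneg (by linarith [hx.2]) _),
      ← rpow_mul hx.1.le, ← rpow_mul (by linarith [hx.2])]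
    congr 2 <;> field_simp
  have f_meas : ∀ c u v : ℝ,
      AEStronglyMeasurable (f c u v) (volume.restrict (Ioo (0:ℝ) 1)) := by
    intro c u v
    refine ContinuousOn.aestronglyMeasurable ?_ measurableSet_Ioo
    refine ContinuousOn.mul (continuousOn_of_forall_continuousAt fun x hx => ?_)
      (continuousOn_of_forall_continuousAt fun x hx => ?_)
    · exact Real.continuousAt_rpow_const _ _ (Or.inl hx.1.ne')
    · exact (Real.continuousAt_rpow_const (1 - x) _
        (Or.inl (sub_ne_zero.mpr hx.2.ne'))).comp
        ((continuous_const.sub continuous_id).continuousAt)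
  have f_mem_Lp : ∀ {c u v : ℝ} (_ : 0 < c) (_ : 0 < u) (_ : 0 < v),
      MemLp (f c u v) (ENNReal.ofReal (1 / c)) (volume.restrict (Ioo (0:ℝ) 1)) := by
    intro c u v hc hu hv
    have A : ENNReal.ofReal (1 / c) ≠ 0 := by
      rwa [Ne, ENNReal.ofReal_eq_zero, not_le, one_div_pos]
    have B : ENNReal.ofReal (1 / c) ≠ ⊤ := ENNReal.ofReal_ne_top
    rw [← memLp_norm_rpow_iff _ A B, ENNReal.toReal_ofReal (one_div_nonneg.mpr hc.le),
      ENNReal.div_self A B, memLp_one_iff_integrable]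
    · apply Integrable.congr (betaInt_integrable hu hv)
      refine eventuallyEq_of_mem (self_mem_ae_restrict measurableSet_Ioo) fun x hx => ?_
      rw [fpow hc u v hx]
      congr 1
      exact (norm_of_nonneg (posf _ _ _ x hx)).symm
    · exact f_meas c u v
  have hs : 0 < a * s₁ + b * s₂ := by positivity
  have ht : 0 < a * t₁ + b * t₂ := by positivity
  have key := MeasureTheory.integral_mul_le_Lp_mul_Lq_of_nonneg e (posf' a s₁ t₁) (posf' b s₂ t₂)
    (f_mem_Lp ha hs₁ ht₁) (f_mem_Lp hb hs₂ ht₂)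
  rw [myBeta, myBeta, myBeta]
  convert key using 1
  · refine setIntegral_congr_fun measurableSet_Ioo fun x hx => ?_
    dsimp only [f]
    rw [mul_mul_mul_comm, ← Real.rpow_add hx.1,
      ← Real.rpow_add (show (0:ℝ) < 1 - x by linarith [hx.2])]
    congr 2 <;> nlinarith [hab]
  · rw [one_div_one_div, one_div_one_div]
    congr 2 <;> exact setIntegral_congr_fun measurableSet_Ioo fun x hx => fpow (by assumption) _ _ hx

lemma concave_h : ConcaveOn ℝ {p : ℝ × ℝ | 0 < p.1 ∧ 0 < p.2}
    (fun p => Real.log (Real.Gamma (p.1 + p.2)) - Real.log (Real.Gamma p.1)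
      - Real.log (Real.Gamma p.2)) := by
  have hconv : Convex ℝ {p : ℝ × ℝ | 0 < p.1 ∧ 0 < p.2} := by
    have : {p : ℝ × ℝ | 0 < p.1 ∧ 0 < p.2} = (Ioi (0:ℝ)) ×ˢ (Ioi (0:ℝ)) := by
      ext p; simp [Set.mem_prod]
    rw [this]
    exact (convex_Ioi 0).prod (convex_Ioi 0)
  refine concaveOn_iff_forall_pos.mpr ⟨hconv, fun p hp q hq a b ha hb hab => ?_⟩
  obtain ⟨hp1, hp2⟩ := hp
  obtain ⟨hq1, hq2⟩ := hq
  have key := myBeta_holder hp1 hp2 hq1 hq2 ha hb hab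
  have hBp := myBeta_pos hp1 hp2
  have hBq := myBeta_pos hq1 hq2
  have hs : (0:ℝ) < a * p.1 + b * q.1 := by positivity
  have ht : (0:ℝ) < a * p.2 + b * q.2 := by positivity
  have hlog := Real.log_le_log (myBeta_pos hs ht) key
  rw [Real.log_mul (by positivity) (by positivity), Real.log_rpow hBp, Real.log_rpow hBq,
    log_myBeta hs ht] at hlog
  rw [log_myBeta hp1 hp2, log_myBeta hq1 hq2] at hlog
  simp only [smul_eq_mul, Prod.fst_add, Prod.snd_add, Prod.smul_fst, Prod.smul_snd]
  nlinarith [hlog]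

lemma concave_F : ∀ (d : ℕ), ConcaveOn ℝ {α : Fin d → ℝ | ∀ i, 0 < α i}
    (fun α => Real.log (Real.Gamma (∑ i, α i)) - ∑ i, Real.log (Real.Gamma (α i))) := by
  intro d
  induction d with
  | zero =>
    refine ⟨?_, fun α _ β _ a b ha hb hab => le_of_eq ?_⟩
    · intro α _ β _ a b _ _ _ i; exact absurd i.pos (by simp [i.2.not_gt]);
    · simp
  | succ d ih =>
    set S : Set (Fin (d+1) → ℝ) := {α | ∀ i, 0 < α i} with hS
    have hSconv : Convex ℝ S := by
      have : S = Set.pi univ (fun _ : Fin (d+1) => Ioi (0:ℝ)) := by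
        ext α; simp [hS, Set.mem_pi]
      rw [this]; exact convex_pi (fun i _ => convex_Ioi 0)
    rcases Nat.eq_zero_or_pos d with hd | hd
    · subst hd
      refine ⟨hSconv, fun α hα β hβ a b ha hb hab => le_of_eq ?_⟩
      simp [Fin.sum_univ_succ, smul_eq_mul]
    · -- d ≥ 1
      haveI : Nonempty (Fin d) := ⟨⟨0, hd⟩⟩
      have hsum_pos : ∀ α ∈ S, (0:ℝ) < ∑ i : Fin d, α i.succ := fun α hα =>
        Finset.sum_pos (fun i _ => hα i.succ) Finset.univ_nonempty
      have h1 : ConcaveOn ℝ S (fun α : Fin (d+1) → ℝ =>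
          Real.log (Real.Gamma (α 0 + ∑ i : Fin d, α i.succ)) - Real.log (Real.Gamma (α 0))
            - Real.log (Real.Gamma (∑ i : Fin d, α i.succ))) := by
        have key := (concave_h.comp_affineMap
          ((LinearMap.prod (LinearMap.proj (φ := fun _ : Fin (d+1) => ℝ) 0)
            (∑ i : Fin d, LinearMap.proj (φ := fun _ : Fin (d+1) => ℝ) i.succ)).toAffineMap)).subset
          (fun α hα => ?_) hSconv
        · refine key.congr fun α _ => Eq.symm ?_
          simp [Function.comp, LinearMap.prod_apply, LinearMap.proj_apply,
            LinearMap.sum_apply]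
        · simp only [mem_preimage, mem_setOf_eq, LinearMap.coe_toAffineMap,
            LinearMap.prod_apply, LinearMap.proj_apply, LinearMap.sum_apply, Pi.prod]
          exact ⟨hα 0, by simpa using hsum_pos α hα⟩
      have h2 : ConcaveOn ℝ S (fun α : Fin (d+1) → ℝ =>
          Real.log (Real.Gamma (∑ i : Fin d, α i.succ))
            - ∑ i : Fin d, Real.log (Real.Gamma (α i.succ))) := by
        exact (ih.comp_affineMap
          ((LinearMap.funLeft ℝ ℝ Fin.succ).toAffineMap)).subset (fun α hα i => hα i.succ) hSconv
      have hadd := h1.add h2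
      refine hadd.congr fun α _ => Eq.symm ?_
      rw [Fin.sum_univ_succ, Fin.sum_univ_succ]
      simp only [Pi.add_apply]
      ring
lemma concave_lin {d : ℕ} (c : Fin d → ℝ) {s : Set (Fin d → ℝ)} (hs : Convex ℝ s) :
    ConcaveOn ℝ s (fun α => ∑ i, (α i - 1) * c i) := by
  refine ⟨hs, fun α _ β _ a b ha hb hab => le_of_eq ?_⟩
  simp only [smul_eq_mul, Pi.add_apply, Pi.smul_apply, Finset.mul_sum,
    ← Finset.sum_add_distrib]
  refine Finset.sum_congr rfl fun i _ => ?_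
  linear_combination (-(c i)) * hab


/-- The Dirichlet log-likelihood, as a function of `α ∈ (0,∞)^d`, is concave:
for data `x⁽¹⁾,…,x⁽ⁿ⁾` in the interior of the simplex, the map
`α ↦ ∑ₖ [log Γ(∑ αᵢ) − ∑ log Γ(αᵢ) + ∑ (αᵢ−1) log xᵢ⁽ᵏ⁾]` is concave on
`{α | ∀ i, 0 < α i}`. -/
theorem stmt_9 {d n : ℕ} (x : Fin n → Fin d → ℝ)
    (hx : ∀ k i, 0 < x k i) (hxs : ∀ k, ∑ i, x k i = 1) :
    ConcaveOn ℝ {α : Fin d → ℝ | ∀ i, 0 < α i}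
      (fun α => ∑ k : Fin n,
        (Real.log (Real.Gamma (∑ i, α i)) - (∑ i, Real.log (Real.Gamma (α i)))
          + ∑ i, (α i - 1) * Real.log (x k i))) := by

  have hSconv : Convex ℝ {α : Fin d → ℝ | ∀ i, 0 < α i} := by
    have : {α : Fin d → ℝ | ∀ i, 0 < α i} = Set.pi univ (fun _ : Fin d => Ioi (0:ℝ)) := by
      ext α; simp [Set.mem_pi]
    rw [this]; exact convex_pi (fun i _ => convex_Ioi 0)
  have hF := (concave_F d).smul (by positivity : (0:ℝ) ≤ (n:ℝ))
  have hlin := concave_lin (fun i => ∑ k, Real.log (x k i)) hSconv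
  have hsum := hF.add hlin
  refine hsum.congr fun α _ => Eq.symm ?_
  simp only [Pi.add_apply, smul_eq_mul]
  rw [Finset.sum_add_distrib, Finset.sum_const, Finset.card_univ, Fintype.card_fin,
    nsmul_eq_mul]
  congr 1
  rw [Finset.sum_comm]
  exact Finset.sum_congr rfl fun i _ => (Finset.mul_sum _ _ _).symm
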